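/- Let X be a Gaussian random vector with positive definite precision matrix Θ that is an M-matrix. Then for any distinct i, j ∈ [p] and any S ⊆ [p] \ {i,j}, the partial correlation coefficient satisfies ρ_{ij|S} ≥ ρ_{ij|[p]\{i,j}}. -/

import Mathlib

open Matrix Finset in
/-- Sum of `Function.extend f x 0` against `g` over the codomain equals the sum over the domain. -/
lemma aux_sum_extend {m n : Type*} [Fintype m] [Fintype n] [DecidableEq n]
    {f : m → n} (hf : Function.Injective f) (x : m → ℝ) (g : n → ℝ) :
    ∑ l, Function.extend f x 0 l * g l = ∑ a, x a * g (f a) := by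
  have h1 : ∑ l ∈ Finset.univ.image f, Function.extend f x 0 l * g l
      = ∑ a, Function.extend f x 0 (f a) * g (f a) :=
    Finset.sum_image (fun a _ b _ h => hf h)
  rw [← Finset.sum_subset (Finset.subset_univ (Finset.univ.image f))
      (fun l _ hl => by
        rw [Function.extend_apply' _ _ _
          (fun ⟨a, ha⟩ => hl (Finset.mem_image.mpr ⟨a, Finset.mem_univ a, ha⟩))]
        simp), h1]
  simp [hf.extend_apply]

open Matrix Finset in
/-- A principal submatrix (along an injective index map) of a positive definite matrix is
positive definite. -/
lemma posDef_submatrix_inj {m n : Type*} [Fintype m] [Fintype n] [DecidableEq m] [DecidableEq n]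
    {Θ : Matrix n n ℝ} (hpd : Θ.PosDef) {f : m → n} (hf : Function.Injective f) :
    (Θ.submatrix f f).PosDef := by
  rw [posDef_iff_dotProduct_mulVec]
  constructor
  · exact hpd.1.submatrix f
  · intro x hx
    set y : n → ℝ := Function.extend f x 0 with hy
    have hyne : y ≠ 0 := by
      obtain ⟨a, ha⟩ := Function.ne_iff.mp hx
      intro h
      apply ha
      have := congrFun h (f a)
      rwa [hy, hf.extend_apply] at this
    have hcalc : star x ⬝ᵥ (Θ.submatrix f f) *ᵥ x = star y ⬝ᵥ Θ *ᵥ y := by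
      simp only [star_trivial, dotProduct, mulVec, submatrix_apply]
      rw [aux_sum_extend hf x (fun l => ∑ m', Θ l m' * y m')]
      refine Finset.sum_congr rfl fun a _ => ?_
      congr 1
      have : ∑ m', Θ (f a) m' * y m' = ∑ l, y l * Θ (f a) l := by
        refine Finset.sum_congr rfl fun l _ => mul_comm _ _
      rw [this, aux_sum_extend hf x (fun l => Θ (f a) l)]
      refine Finset.sum_congr rfl fun b _ => ?_
      rw [mul_comm]
    rw [hcalc]
    exact hpd.dotProduct_mulVec_pos hyne

open Matrix Finset in
/-- A positive definite matrix has positive diagonal entries. -/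
lemma posDef_diag_pos {n : Type*} [Fintype n] [DecidableEq n]
    {A : Matrix n n ℝ} (hA : A.PosDef) (a : n) : 0 < A a a := by
  have := hA.dotProduct_mulVec_pos (x := Pi.single a 1) (by simp [Function.ne_iff])
  simpa [dotProduct, mulVec, Pi.single_apply, Finset.sum_ite_eq] using this

open Matrix Finset in
/-- A positive semidefinite invertible matrix is positive definite. -/
lemma posDef_of_posSemidef_invertible {n : Type*} [Fintype n] [DecidableEq n]
    {A : Matrix n n ℝ} [Invertible A] (h : A.PosSemidef) : A.PosDef := by
  refine posDef_iff_dotProduct_mulVec.mpr ⟨h.1, fun x hx => lt_of_le_of_ne (h.dotProduct_mulVec_nonneg x) fun heq => hx ?_⟩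
  have h0 : A *ᵥ x = 0 := (h.dotProduct_mulVec_zero_iff x).mp heq.symm
  have : (⅟A) *ᵥ (A *ᵥ x) = x := by
    rw [mulVec_mulVec, invOf_mul_self, one_mulVec]
  rw [h0, mulVec_zero] at this
  exact this.symm

open Matrix Finset in
/-- The inverse of a positive definite M-matrix is entrywise nonnegative. -/
lemma inv_entry_nonneg {n : Type*} [Fintype n] [DecidableEq n]
    {Θ : Matrix n n ℝ} (hpd : Θ.PosDef) (hM : ∀ a b, a ≠ b → Θ a b ≤ 0) :
    ∀ a b, 0 ≤ Θ⁻¹ a b := by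
  intro a b
  by_contra hneg
  push_neg at hneg
  set x : n → ℝ := fun k => Θ⁻¹ k b with hxdef
  have hdet : IsUnit Θ.det := isUnit_iff_ne_zero.mpr hpd.det_pos.ne'
  have hmul : Θ *ᵥ x = fun k => if k = b then 1 else 0 := by
    funext k
    have h1 : (Θ *ᵥ x) k = (Θ * Θ⁻¹) k b := by
      simp [mulVec, Matrix.mul_apply, dotProduct, hxdef]
    rw [h1, Matrix.mul_nonsing_inv Θ hdet, Matrix.one_apply]
  set y : n → ℝ := fun k => min (x k) 0 with hydef
  have hy0 : ∀ k, y k ≤ 0 := fun k => min_le_right _ _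
  have hxy : ∀ k, 0 ≤ x k - y k := fun k => by
    simp only [hydef, sub_nonneg]; exact min_le_left _ _
  have hyx : ∀ k, y k * (x k - y k) = 0 := fun k => by
    rcases le_total (x k) 0 with h | h
    · simp [hydef, min_eq_left h]
    · simp [hydef, min_eq_right h]
  have hyne : y ≠ 0 := by
    intro h
    have := congrFun h a
    rw [hydef] at this
    simp only [min_eq_left hneg.le, Pi.zero_apply] at this
    exact absurd this (ne_of_eq_of_ne (min_eq_left hneg.le) hneg.ne)
  have hq4 : 0 < star y ⬝ᵥ Θ *ᵥ y := hpd.dotProduct_mulVec_pos hyne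
  have hq3 : 0 ≤ star y ⬝ᵥ Θ *ᵥ (x - y) := by
    simp only [star_trivial, dotProduct, mulVec]
    refine Finset.sum_nonneg fun k _ => ?_
    rw [Finset.mul_sum]
    refine Finset.sum_nonneg fun l _ => ?_
    rcases eq_or_ne k l with rfl | hkl
    · have : y k * (Θ k k * (x - y) k) = Θ k k * (y k * (x k - y k)) := by
        simp [Pi.sub_apply]; ring
      rw [this, hyx k, mul_zero]
    · have h1 : Θ k l * (x - y) l ≤ 0 :=
        mul_nonpos_of_nonpos_of_nonneg (hM k l hkl) (by simpa using hxy l)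
      exact mul_nonneg_of_nonpos_of_nonpos (hy0 k) h1
  have hq1 : star y ⬝ᵥ Θ *ᵥ x = y b := by
    rw [hmul]
    simp [dotProduct, mul_ite, Finset.sum_ite_eq']
  have hsplit : star y ⬝ᵥ Θ *ᵥ x = star y ⬝ᵥ Θ *ᵥ y + star y ⬝ᵥ Θ *ᵥ (x - y) := by
    rw [← dotProduct_add, ← mulVec_add]
    congr 1
    funext k; simp
  have : 0 < y b := by rw [← hq1, hsplit]; linarith
  exact absurd this (not_lt.mpr (hy0 b))

open Matrix Finset in
/-- Key lemma: for a symmetric positive definite M-matrix `Θ` and any index set `M`,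
the inverse of the principal submatrix of `Θ⁻¹` on `M` (which equals the Schur complement)
is positive definite and entrywise bounded above by the corresponding entries of `Θ`. -/
lemma key_schur {n : Type*} [Fintype n] [DecidableEq n] {Θ : Matrix n n ℝ}
    (hpd : Θ.PosDef) (hsym : Θ.IsSymm) (hMm : ∀ a b, a ≠ b → Θ a b ≤ 0) (M : Finset n) :
    (((Θ⁻¹).submatrix ((↑) : ↥M → n) ((↑) : ↥M → n))⁻¹).PosDef ∧
    ∀ a b : ↥M, ((Θ⁻¹).submatrix ((↑) : ↥M → n) ((↑) : ↥M → n))⁻¹ a b ≤ Θ ↑a ↑b := by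
  classical
  set e : {x // x ∈ M} ⊕ {x // ¬ x ∈ M} ≃ n := Equiv.sumCompl (· ∈ M) with he
  set Θ' : Matrix _ _ ℝ := Θ.submatrix e e with hΘ'def
  have hΘ' : Θ'.PosDef := posDef_submatrix_inj hpd e.injective
  set A := Θ'.toBlocks₁₁ with hA
  set B := Θ'.toBlocks₁₂ with hB
  set C := Θ'.toBlocks₂₁ with hC
  set D := Θ'.toBlocks₂₂ with hD
  have hblocks : Θ' = fromBlocks A B C D := (fromBlocks_toBlocks Θ').symm
  have hCB : C = Bᴴ := by
    ext k l
    simp only [hC, hB, toBlocks₂₁, toBlocks₁₂, conjTranspose_apply, of_apply, hΘ'def,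
      submatrix_apply, star_trivial]
    exact hsym.apply _ _
  have hDpd : D.PosDef := by
    have : D = Θ.submatrix (Subtype.val : {x // ¬ x ∈ M} → n) Subtype.val := by
      ext k l
      simp [hD, toBlocks₂₂, hΘ'def, he]
    rw [this]
    exact posDef_submatrix_inj hpd Subtype.val_injective
  haveI iD : Invertible D := D.invertibleOfIsUnitDet (isUnit_iff_ne_zero.mpr hDpd.det_pos.ne')
  haveI iΘ' : Invertible Θ' := Θ'.invertibleOfIsUnitDet (isUnit_iff_ne_zero.mpr hΘ'.det_pos.ne')
  haveI iFB : Invertible (fromBlocks A B C D) := iΘ'.copy _ hblocks.symm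
  haveI iS : Invertible (A - B * ⅟D * C) := invertibleOfFromBlocks₂₂Invertible A B C D
  set S := A - B * ⅟D * C with hS
  have hSpsd : S.PosSemidef := by
    have h1 : (fromBlocks A B Bᴴ D).PosSemidef := by
      rw [← hCB, ← hblocks]; exact hΘ'.posSemidef
    have h2 := (PosDef.fromBlocks₂₂ A B hDpd).mp h1
    rwa [hS, invOf_eq_nonsing_inv, hCB]
  have hSpd : S.PosDef := posDef_of_posSemidef_invertible hSpsd
  have hsub : (Θ⁻¹).submatrix ((↑) : ↥M → n) ((↑) : ↥M → n) = S⁻¹ := by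
    have h1 : Θ'⁻¹ = fromBlocks (⅟S) (-(⅟S * B * ⅟D))
        (-(⅟D * C * ⅟S)) (⅟D + ⅟D * C * ⅟S * B * ⅟D) := by
      rw [hblocks, ← invOf_eq_nonsing_inv, invOf_fromBlocks₂₂_eq]
    have h2 : Θ'⁻¹ = (Θ⁻¹).submatrix e e := inv_submatrix_equiv Θ e e
    ext a b
    have h3 : (Θ⁻¹).submatrix ((↑) : ↥M → n) ((↑) : ↥M → n) a b
        = ((Θ⁻¹).submatrix e e) (Sum.inl a) (Sum.inl b) := by simp [he]
    rw [h3, ← h2, h1, invOf_eq_nonsing_inv]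
    rfl
  have hinv : ((Θ⁻¹).submatrix ((↑) : ↥M → n) ((↑) : ↥M → n))⁻¹ = S := by
    rw [hsub, Matrix.inv_inv_of_invertible]
  refine ⟨hinv ▸ hSpd, fun a b => ?_⟩
  rw [hinv]
  have hAab : A a b = Θ ↑a ↑b := by simp [hA, toBlocks₁₁, hΘ'def, he]
  have hcorr : 0 ≤ (B * ⅟D * C) a b := by
    rw [Matrix.mul_apply]
    refine Finset.sum_nonneg fun l _ => ?_
    rw [Matrix.mul_apply, Finset.sum_mul]
    refine Finset.sum_nonneg fun k _ => ?_
    have hBak : B a k ≤ 0 := by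
      have : (↑a : n) ≠ ↑k := fun h => k.2 (h ▸ a.2)
      simpa [hB, toBlocks₁₂, hΘ'def, he] using hMm _ _ this
    have hClb : C l b ≤ 0 := by
      have : (↑l : n) ≠ ↑b := fun h => l.2 (h ▸ b.2)
      simpa [hC, toBlocks₂₁, hΘ'def, he] using hMm _ _ this
    have hDkl : 0 ≤ ⅟D k l := by
      rw [invOf_eq_nonsing_inv]
      refine inv_entry_nonneg hDpd (fun k' l' h => ?_) k l
      have : (↑k' : n) ≠ ↑l' := fun hh => h (Subtype.ext hh)
      simpa [hD, toBlocks₂₂, hΘ'def, he] using hMm _ _ this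
    have : B a k * ⅟D k l ≤ 0 := mul_nonpos_of_nonpos_of_nonneg hBak hDkl
    exact mul_nonneg_of_nonpos_of_nonpos this hClb
  have : S a b = A a b - (B * ⅟D * C) a b := by simp [hS]
  rw [this, hAab]
  linarith

/-- The partial correlation coefficient `ρ_{ij|S}` of a Gaussian vector with covariance
matrix `Sg`, computed from the inverse of the principal submatrix on `M = S ∪ {i,j}`:
`ρ_{ij|S} = −((Σ_{M,M})⁻¹)_{ij} / sqrt(((Σ_{M,M})⁻¹)_{ii} ((Σ_{M,M})⁻¹)_{jj})`. -/
noncomputable def partialCorr {p : ℕ} (Sg : Matrix (Fin p) (Fin p) ℝ)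
    (i j : Fin p) (S : Finset (Fin p)) : ℝ :=
  let A := (Matrix.of fun a b : ↥(insert i (insert j S)) => Sg a.1 b.1)⁻¹;
  -(A ⟨i, Finset.mem_insert_self i _⟩
      ⟨j, Finset.mem_insert_of_mem (Finset.mem_insert_self j S)⟩) /
    Real.sqrt (A ⟨i, Finset.mem_insert_self i _⟩ ⟨i, Finset.mem_insert_self i _⟩ *
      A ⟨j, Finset.mem_insert_of_mem (Finset.mem_insert_self j S)⟩
        ⟨j, Finset.mem_insert_of_mem (Finset.mem_insert_self j S)⟩)

/-- For a Gaussian random vector whose precision matrix `Θ` is a symmetric positive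
definite M-matrix (MTP₂), with covariance `Σ = Θ⁻¹`: for any distinct `i, j` and any
`S ⊆ [p] \ {i,j}`, the partial correlation satisfies
`ρ_{ij|S} ≥ ρ_{ij|[p]∖{i,j}}`. -/
theorem stmt2 {p : ℕ} (Θ : Matrix (Fin p) (Fin p) ℝ)
    (hpd : Θ.PosDef) (hsym : Θ.IsSymm)
    (hM : ∀ i j : Fin p, i ≠ j → Θ i j ≤ 0)
    (Sg : Matrix (Fin p) (Fin p) ℝ) (hSg : Sg = Θ⁻¹)
    (i j : Fin p) (hij : i ≠ j) (S : Finset (Fin p)) (hiS : i ∉ S) (hjS : j ∉ S) :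
    partialCorr Sg i j S ≥ partialCorr Sg i j (Finset.univ \ {i, j}) := by
  subst hSg
  set M₁ : Finset (Fin p) := insert i (insert j S) with hM₁
  set M₂ : Finset (Fin p) := insert i (insert j (Finset.univ \ {i, j})) with hM₂
  have hM₂univ : ∀ x : Fin p, x ∈ M₂ := by
    intro x
    simp only [hM₂, Finset.mem_insert, Finset.mem_sdiff, Finset.mem_univ, true_and,
      Finset.mem_singleton]
    by_cases h1 : x = i
    · exact Or.inl h1
    · by_cases h2 : x = j
      · exact Or.inr (Or.inl h2)
      · exact Or.inr (Or.inr (by simp [h1, h2]))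
  have hdet : IsUnit Θ.det := isUnit_iff_ne_zero.mpr hpd.det_pos.ne'
  have hA₂ : ∀ a b : ↥M₂, (Matrix.of fun a b : ↥M₂ => (Θ⁻¹) a.1 b.1)⁻¹ a b = Θ ↑a ↑b := by
    set e₂ : ↥M₂ ≃ Fin p := Equiv.subtypeUnivEquiv hM₂univ with he₂
    have h1 : (Matrix.of fun a b : ↥M₂ => (Θ⁻¹) a.1 b.1) = (Θ⁻¹).submatrix e₂ e₂ := rfl
    intro a b
    rw [h1, Matrix.inv_submatrix_equiv, Matrix.nonsing_inv_nonsing_inv Θ hdet]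
    rfl
  obtain ⟨hT₁pd, hT₁le⟩ := key_schur hpd hsym hM M₁
  have h1eq : (Matrix.of fun a b : ↥M₁ => (Θ⁻¹) a.1 b.1)⁻¹
      = ((Θ⁻¹).submatrix ((↑) : ↥M₁ → Fin p) ((↑) : ↥M₁ → Fin p))⁻¹ := rfl
  rw [ge_iff_le]
  unfold partialCorr
  simp +zetaDelta only [hA₂, h1eq]
  set T := ((Θ⁻¹).submatrix ((↑) : ↥M₁ → Fin p) ((↑) : ↥M₁ → Fin p))⁻¹ with hT
  set ia : ↥M₁ := ⟨i, Finset.mem_insert_self i _⟩ with hia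
  set ja : ↥M₁ := ⟨j, Finset.mem_insert_of_mem (Finset.mem_insert_self j S)⟩ with hja
  have hii : 0 < T ia ia := posDef_diag_pos hT₁pd ia
  have hjj : 0 < T ja ja := posDef_diag_pos hT₁pd ja
  have hii' : T ia ia ≤ Θ i i := hT₁le ia ia
  have hjj' : T ja ja ≤ Θ j j := hT₁le ja ja
  have hij' : T ia ja ≤ Θ i j := hT₁le ia ja
  have hΘij : Θ i j ≤ 0 := hM i j hij
  have hs : 0 < Real.sqrt (T ia ia * T ja ja) := Real.sqrt_pos.mpr (mul_pos hii hjj)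
  have hst : Real.sqrt (T ia ia * T ja ja) ≤ Real.sqrt (Θ i i * Θ j j) :=
    Real.sqrt_le_sqrt (mul_le_mul hii' hjj' hjj.le (by linarith))
  calc -Θ i j / Real.sqrt (Θ i i * Θ j j)
      ≤ -Θ i j / Real.sqrt (T ia ia * T ja ja) :=
        div_le_div_of_nonneg_left (by linarith) hs hst
    _ ≤ -T ia ja / Real.sqrt (T ia ia * T ja ja) :=
        div_le_div_of_nonneg_right (by linarith) hs.le
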